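/- Let H ∈ ℝ^{3×3} be a matrix and let a, b, c ∈ ℝ² be points with w_H(a) ≠ 0, w_H(b) ≠ 0 and w_H(c) ≠ 0. Then cross(f_H(a), f_H(b), f_H(c)) = det(H) · cross(a, b, c) / (w_H(a) · w_H(b) · w_H(c)). -/

import Mathlib

/-- The cross value of three points in the plane: the z-coordinate of the
cross product `(b - a) × (c - b)`. -/
noncomputable def cross (a b c : ℝ × ℝ) : ℝ :=
  (b.1 - a.1) * (c.2 - b.2) - (b.2 - a.2) * (c.1 - b.1)

/-- The lift of a planar point `(x, y)` to `(x, y, 1) ∈ ℝ³`. -/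
noncomputable def liftPt (p : ℝ × ℝ) : Fin 3 → ℝ := ![p.1, p.2, 1]

/-- The homography denominator: the third coordinate of `H ℓ(p)`. -/
noncomputable def wH (H : Matrix (Fin 3) (Fin 3) ℝ) (p : ℝ × ℝ) : ℝ :=
  H.mulVec (liftPt p) 2

/-- The planar homography induced by the matrix `H`. -/
noncomputable def fH (H : Matrix (Fin 3) (Fin 3) ℝ) (p : ℝ × ℝ) : ℝ × ℝ :=
  (H.mulVec (liftPt p) 0 / wH H p, H.mulVec (liftPt p) 1 / wH H p)

set_option maxHeartbeats 2000000 in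
theorem cross_fH (H : Matrix (Fin 3) (Fin 3) ℝ) (a b c : ℝ × ℝ)
    (ha : wH H a ≠ 0) (hb : wH H b ≠ 0) (hc : wH H c ≠ 0) :
    cross (fH H a) (fH H b) (fH H c) =
      H.det * cross a b c / (wH H a * wH H b * wH H c) := by
  simp only [cross, fH, wH, liftPt, Matrix.mulVec, dotProduct,
    Fin.sum_univ_three, Matrix.cons_val_zero, Matrix.cons_val_one,
    Matrix.head_cons, Matrix.cons_val_two, Matrix.tail_cons,
    Matrix.det_fin_three, mul_one] at *
  have hb' : b.1 * H 2 0 + b.2 * H 2 1 + H 2 2 ≠ 0 := by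
    rwa [mul_comm b.1, mul_comm b.2]
  field_simp
  ring
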